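/- Let Φ : B(H) → B(H) be a unital positive linear map, A a bounded self-adjoint operator with spectrum in an interval J, f convex continuous on J, and x a unit vector. Then f(⟨Φ(A)x, x⟩) ≤ ⟨Φ(f(A))x, x⟩. -/

import Mathlib

open ContinuousLinearMap MeasureTheory

variable {H : Type*} [NormedAddCommGroup H] [InnerProductSpace ℂ H] [CompleteSpace H]

/-- The numerical radius of a bounded operator. -/
noncomputable def numRadius (A : H →L[ℂ] H) : ℝ :=
  sSup {r : ℝ | ∃ x : H, ‖x‖ = 1 ∧ r = ‖(inner ℂ (A x) x : ℂ)‖}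

/-- The absolute value `|A| = (A*A)^(1/2)` of a bounded operator. -/
noncomputable def opAbs (A : H →L[ℂ] H) : H →L[ℂ] H := CFC.sqrt (adjoint A * A)

section AuxLemmas
open Set


-- chord inequalities
lemma chord_right {s : Set ℝ} {f : ℝ → ℝ} (hconv : ConvexOn ℝ s f) {x y z : ℝ}
    (hx : x ∈ s) (hz : z ∈ s) (hxy : x < y) (hyz : y < z) :
    f y + (f y - f x) / (y - x) * (z - y) ≤ f z := by
  have h := hconv.slope_mono_adjacent hx hz hxy hyz
  have h2 : (f y - f x) / (y - x) * (z - y) ≤ f z - f y :=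
    (le_div_iff₀ (by linarith)).mp h
  linarith

lemma chord_left {s : Set ℝ} {f : ℝ → ℝ} (hconv : ConvexOn ℝ s f) {x y z : ℝ}
    (hx : x ∈ s) (hz : z ∈ s) (hxy : x < y) (hyz : y < z) :
    f y + (f z - f y) / (z - y) * (x - y) ≤ f x := by
  have h := hconv.slope_mono_adjacent hx hz hxy hyz
  have h2 : f y - f x ≤ (f z - f y) / (z - y) * (y - x) :=
    (div_le_iff₀ (by linarith)).mp h
  nlinarith

/-- approximate supporting line for a convex continuous function on `[m, M]`. -/
lemma exists_affine_minorant {m M a : ℝ} (ham : m ≤ a) (haM : a ≤ M) {f : ℝ → ℝ}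
    (hconv : ConvexOn ℝ (Icc m M) f) (hcont : ContinuousOn f (Icc m M))
    {ε : ℝ} (hε : 0 < ε) :
    ∃ α β : ℝ, (∀ t ∈ Icc m M, α * t + β ≤ f t) ∧ f a - ε ≤ α * a + β := by
  have haI : a ∈ Icc m M := ⟨ham, haM⟩
  obtain ⟨δ, hδ, hδf⟩ : ∃ δ > 0, ∀ t ∈ Icc m M, |t - a| < δ → |f t - f a| < ε / 2 := by
    have h := hcont a haI
    rw [Metric.continuousWithinAt_iff] at h
    obtain ⟨δ, hδ, h⟩ := h (ε / 2) (by linarith)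
    exact ⟨δ, hδ, fun t ht hd => by
      simpa [Real.dist_eq] using h ht (by simpa [Real.dist_eq] using hd)⟩
  rcases eq_or_lt_of_le ham with h | hma
  · rcases eq_or_lt_of_le haM with h2 | haM'
    · -- m = a = M
      refine ⟨0, f a - ε, fun t ht => ?_, by norm_num⟩
      have : t = a := le_antisymm (h2 ▸ ht.2) (h ▸ ht.1)
      rw [this]; norm_num; linarith
    · -- a = m < M : right chord
      set c := min M (a + δ / 2) with hcdef
      have hac : a < c := lt_min haM' (by linarith)
      have hcM : c ≤ M := min_le_left _ _
      have hcI : c ∈ Icc m M := ⟨by linarith, hcM⟩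
      have hca : c - a ≤ δ / 2 := by
        have := min_le_right M (a + δ / 2); linarith
      have hfc : |f c - f a| < ε / 2 := hδf c hcI (by rw [abs_of_pos (by linarith)]; linarith)
      set α := (f c - f a) / (c - a) with hαdef
      have hkey : α * (c - a) = f c - f a :=
        div_mul_cancel₀ _ (by linarith : c - a ≠ 0)
      refine ⟨α, f a - α * a - ε, fun t ht => ?_, by linarith⟩
      have hta : a ≤ t := by linarith [ht.1]
      rcases le_or_gt c t with hct | htc
      · -- t ≥ c
        rcases eq_or_lt_of_le hct with rfl | hct'
        · nlinarith [abs_lt.mp hfc]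
        · have := chord_right hconv haI ht hac hct'
          -- f c + α * (t - c) ≤ f t
          nlinarith [this]
      · -- a ≤ t < c
        have hft : |f t - f a| < ε / 2 := hδf t ht (by rw [abs_of_nonneg (by linarith)]; linarith)
        have hb : α * (t - a) ≤ ε / 2 := by
          calc α * (t - a) ≤ |α * (t - a)| := le_abs_self _
            _ = |α| * |t - a| := abs_mul _ _
            _ ≤ |α| * (c - a) := by
                have : |t - a| ≤ c - a := by rw [abs_of_nonneg (by linarith)]; linarith
                exact mul_le_mul_of_nonneg_left this (abs_nonneg _)
            _ = |f c - f a| := by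
                rw [hαdef, abs_div, abs_of_pos (by linarith : (0:ℝ) < c - a)]
                exact div_mul_cancel₀ _ (by linarith : c - a ≠ 0)
            _ ≤ ε / 2 := hfc.le
        nlinarith [abs_lt.mp hft]
  · -- m < a : left chord
    set c := max m (a - δ / 2) with hcdef
    have hca : c < a := max_lt hma (by linarith)
    have hmc : m ≤ c := le_max_left _ _
    have hcI : c ∈ Icc m M := ⟨hmc, le_trans hca.le haM⟩
    have hca2 : a - c ≤ δ / 2 := by
      have := le_max_right m (a - δ / 2); linarith
    have hfc : |f c - f a| < ε / 2 := hδf c hcI (by rw [abs_of_neg (by linarith)]; linarith)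
    set α := (f a - f c) / (a - c) with hαdef
    have hkey : α * (a - c) = f a - f c :=
      div_mul_cancel₀ _ (by linarith : a - c ≠ 0)
    refine ⟨α, f a - α * a - ε, fun t ht => ?_, by linarith⟩
    rcases le_or_gt t c with htc | hct
    · -- t ≤ c
      rcases eq_or_lt_of_le htc with rfl | htc'
      · nlinarith [abs_lt.mp hfc]
      · have := chord_left hconv ht haI htc' hca
        nlinarith [this]
    · rcases le_or_gt a t with hat | hta
      · rcases eq_or_lt_of_le hat with rfl | hat'
        · linarith
        · have := chord_right hconv hcI ht hca hat'
          nlinarith [this]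
      · -- c < t < a
        have hft : |f t - f a| < ε / 2 := hδf t ht (by rw [abs_of_neg (by linarith)]; linarith)
        have hb : α * (t - a) ≤ ε / 2 := by
          calc α * (t - a) ≤ |α * (t - a)| := le_abs_self _
            _ = |α| * |t - a| := abs_mul _ _
            _ ≤ |α| * (a - c) := by
                have : |t - a| ≤ a - c := by rw [abs_of_neg (by linarith)]; linarith
                exact mul_le_mul_of_nonneg_left this (abs_nonneg _)
            _ = |f a - f c| := by
                rw [hαdef, abs_div, abs_of_pos (by linarith : (0:ℝ) < a - c)]
                exact div_mul_cancel₀ _ (by linarith : a - c ≠ 0)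
            _ ≤ ε / 2 := by rw [abs_sub_comm]; exact hfc.le
        nlinarith [abs_lt.mp hft]

end AuxLemmas

/-- For a unital positive linear map `Φ`, self-adjoint `A` with spectrum in `J`,
convex continuous `f` on `J` and a unit vector `x`: `f(⟪Φ(A)x,x⟫) ≤ ⟪Φ(f(A))x,x⟫`. -/
theorem convex_inner_phi (Φ : (H →L[ℂ] H) →ₗ[ℂ] (H →L[ℂ] H))
    (hpos : ∀ T : H →L[ℂ] H, 0 ≤ T → 0 ≤ Φ T) (hunital : Φ 1 = 1)
    (A : H →L[ℂ] H) (hA : IsSelfAdjoint A)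
    (J : Set ℝ) (hspec : spectrum ℝ A ⊆ J)
    (f : ℝ → ℝ) (hconv : ConvexOn ℝ J f) (hcont : ContinuousOn f J)
    (x : H) (hx : ‖x‖ = 1) :
    f ((inner ℂ ((Φ A) x) x : ℂ).re) ≤ (inner ℂ ((Φ (cfc f A)) x) x : ℂ).re := by
  have hxne : x ≠ 0 := by intro h; rw [h, norm_zero] at hx; norm_num at hx
  have : Nontrivial H := nontrivial_of_ne x 0 hxne
  -- P T = re ⟪Φ T x, x⟫
  set P : (H →L[ℂ] H) → ℝ := fun T => (inner ℂ ((Φ T) x) x : ℂ).re with hP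
  have hPmono : ∀ S T : H →L[ℂ] H, S ≤ T → P S ≤ P T := by
    intro S T h
    have h0 : (0 : H →L[ℂ] H) ≤ Φ T - Φ S := by
      rw [← map_sub]; exact hpos _ (sub_nonneg.mpr h)
    have hp := ((ContinuousLinearMap.nonneg_iff_isPositive _).mp h0).inner_nonneg_left x
    simp only [reApplyInnerSelf, sub_apply, inner_sub_left, map_sub] at hp ⊢
    have hp' := (Complex.le_def.mp hp).1
    simpa [hP, sub_nonneg] using hp'
  have hinner : ∀ (r : ℝ) (v : H), (inner ℂ ((r • v : H)) x : ℂ).re = r * (inner ℂ v x : ℂ).re := by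
    intro r v
    rw [← algebraMap_smul ℂ r v]
    rw [show (algebraMap ℝ ℂ r) = (r : ℂ) from rfl, inner_smul_left]
    simp [Complex.conj_ofReal, Complex.mul_re]
  have hPsmul : ∀ (r : ℝ) (T : H →L[ℂ] H), P (r • T) = r * P T := by
    intro r T
    have h1 : Φ (r • T) = r • Φ T := by
      rw [← algebraMap_smul ℂ r T, _root_.map_smul, algebraMap_smul]
    simp only [hP, h1, coe_smul', Pi.smul_apply]
    exact hinner r _
  have hPalg : ∀ r : ℝ, P (algebraMap ℝ (H →L[ℂ] H) r) = r := by
    intro r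
    rw [Algebra.algebraMap_eq_smul_one, hPsmul]
    have : P 1 = 1 := by
      simp [hP, hunital, inner_self_eq_norm_sq_to_K, hx]
    rw [this, mul_one]
  -- spectrum facts
  have hnonempty : (spectrum ℝ A).Nonempty := hA.spectrum_nonempty
  have hcompact : IsCompact (spectrum ℝ A) := by
    rw [isCompact_iff_compactSpace]; infer_instance
  set m := sInf (spectrum ℝ A) with hm
  set M := sSup (spectrum ℝ A) with hM
  have hmem_m : m ∈ spectrum ℝ A := hcompact.sInf_mem hnonempty
  have hmem_M : M ∈ spectrum ℝ A := hcompact.sSup_mem hnonempty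
  have hsubIcc : spectrum ℝ A ⊆ Set.Icc m M := fun t ht =>
    ⟨csInf_le hcompact.bddBelow ht, le_csSup hcompact.bddAbove ht⟩
  have hIccJ : Set.Icc m M ⊆ J := (hconv.1.ordConnected).out (hspec hmem_m) (hspec hmem_M)
  have hfc : ContinuousOn f (spectrum ℝ A) := hcont.mono (hspec)
  -- m ≤ P A ≤ M
  have hAlow : algebraMap ℝ (H →L[ℂ] H) m ≤ A := by
    have h0 : (0 : H →L[ℂ] H) ≤ cfc (fun t : ℝ => t - m) A :=
      cfc_nonneg (fun t ht => sub_nonneg.mpr (csInf_le hcompact.bddBelow ht))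
    rwa [cfc_sub _ _ _ (by fun_prop) (by fun_prop), cfc_id' ℝ A, cfc_const m A, sub_nonneg] at h0
  have hAhigh : A ≤ algebraMap ℝ (H →L[ℂ] H) M := by
    have h0 : (0 : H →L[ℂ] H) ≤ cfc (fun t : ℝ => M - t) A :=
      cfc_nonneg (fun t ht => sub_nonneg.mpr (le_csSup hcompact.bddAbove ht))
    rwa [cfc_sub _ _ _ (by fun_prop) (by fun_prop), cfc_id' ℝ A, cfc_const M A, sub_nonneg] at h0
  have ham : m ≤ P A := by
    have := hPmono _ _ hAlow; rwa [hPalg] at this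
  have haM : P A ≤ M := by
    have := hPmono _ _ hAhigh; rwa [hPalg] at this
  -- main estimate
  have key : ∀ ε > (0:ℝ), f (P A) ≤ P (cfc f A) + ε := by
    intro ε hε
    obtain ⟨α, β, hline, hval⟩ :=
      exists_affine_minorant ham haM (hconv.subset hIccJ (convex_Icc m M)) (hcont.mono hIccJ) hε
    have hop : α • A + algebraMap ℝ (H →L[ℂ] H) β ≤ cfc f A := by
      have h0 : (0 : H →L[ℂ] H) ≤ cfc (fun t : ℝ => f t - (α * t + β)) A :=
        cfc_nonneg (fun t ht => sub_nonneg.mpr (hline t (hsubIcc ht)))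
      rwa [cfc_sub _ _ _ hfc (by fun_prop),
        cfc_add A _ _ (by fun_prop) (by fun_prop),
        cfc_const_mul_id α A, cfc_const β A, sub_nonneg] at h0
    have hPline : P (α • A + algebraMap ℝ (H →L[ℂ] H) β) = α * P A + β := by
      have e1 : P (α • A + algebraMap ℝ (H →L[ℂ] H) β)
          = P (α • A) + P (algebraMap ℝ (H →L[ℂ] H) β) := by
        simp [hP, map_add, inner_add_left]
      rw [e1, hPsmul, hPalg]
    have := hPmono _ _ hop
    rw [hPline] at this
    linarith
  exact le_of_forall_pos_le_add key
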